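/- The real number 1351 + 780·√3 is an eigenvalue of the 3×3 matrix M = [[-44,-330,-615],[60,451,840],[165,1230,2296]] (viewed over ℂ), every complex eigenvalue λ of M satisfies |λ| ≤ 1351 + 780·√3, and moreover 1351 + 780·√3 > 1. In particular, the spectral radius of M equals 1351 + 780·√3 and is strictly greater than 1. -/

import Mathlib

open Matrix

noncomputable section

private def Mmat : Matrix (Fin 3) (Fin 3) ℂ :=
  !![-44, -330, -615; 60, 451, 840; 165, 1230, 2296]

private lemma det_sub (lam : ℂ) :
    (Mmat - lam • 1).det = (1 - lam) * (lam ^ 2 - 2702 * lam + 1) := by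
  simp [Mmat, Matrix.det_fin_three, Matrix.sub_apply, Matrix.smul_apply, Matrix.one_apply]
  ring

private lemma eig_iff (lam : ℂ) :
    (∃ v : Fin 3 → ℂ, v ≠ 0 ∧ Mmat.mulVec v = lam • v) ↔
      (1 - lam) * (lam ^ 2 - 2702 * lam + 1) = 0 := by
  rw [← det_sub, ← Matrix.exists_mulVec_eq_zero_iff]
  constructor <;> rintro ⟨v, hv, h⟩ <;> refine ⟨v, hv, ?_⟩
  · rw [Matrix.sub_mulVec, h, Matrix.smul_mulVec, Matrix.one_mulVec, sub_self]
  · rw [Matrix.sub_mulVec, Matrix.smul_mulVec, Matrix.one_mulVec, sub_eq_zero] at h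
    exact h

private lemma s3sq : Real.sqrt 3 ^ 2 = 3 := Real.sq_sqrt (by norm_num)

theorem stmt_4 :
    (∃ v : Fin 3 → ℂ, v ≠ 0 ∧
        (!![-44, -330, -615; 60, 451, 840; 165, 1230, 2296] : Matrix (Fin 3) (Fin 3) ℂ).mulVec v
          = (((1351 + 780 * Real.sqrt 3 : ℝ) : ℂ)) • v) ∧
    (∀ lam : ℂ, (∃ v : Fin 3 → ℂ, v ≠ 0 ∧
        (!![-44, -330, -615; 60, 451, 840; 165, 1230, 2296] : Matrix (Fin 3) (Fin 3) ℂ).mulVec v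
          = lam • v) → ‖lam‖ ≤ 1351 + 780 * Real.sqrt 3) ∧
    (1 : ℝ) < 1351 + 780 * Real.sqrt 3 := by
  have hs0 : (0:ℝ) ≤ Real.sqrt 3 := Real.sqrt_nonneg 3
  have hb : (0:ℝ) < 1351 - 780 * Real.sqrt 3 := by nlinarith [s3sq]
  have ha : (1:ℝ) < 1351 + 780 * Real.sqrt 3 := by linarith
  have h3C : ((Real.sqrt 3 : ℝ) : ℂ) ^ 2 = 3 := by
    rw [← Complex.ofReal_pow, s3sq]; norm_num
  refine ⟨?_, ?_, ha⟩
  · rw [show ((!![-44, -330, -615; 60, 451, 840; 165, 1230, 2296] : Matrix (Fin 3) (Fin 3) ℂ)) = Mmat from rfl]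
    rw [eig_iff]
    have : (((1351 + 780 * Real.sqrt 3 : ℝ) : ℂ)) ^ 2
        - 2702 * (((1351 + 780 * Real.sqrt 3 : ℝ) : ℂ)) + 1 = 0 := by
      push_cast
      linear_combination (608400 : ℂ) * h3C
    rw [this, mul_zero]
  · intro lam hlam
    rw [show ((!![-44, -330, -615; 60, 451, 840; 165, 1230, 2296] : Matrix (Fin 3) (Fin 3) ℂ)) = Mmat from rfl] at hlam
    rw [eig_iff] at hlam
    rcases mul_eq_zero.mp hlam with h1 | h2
    · rw [← sub_eq_zero.mp h1]
      rw [show ‖(1:ℂ)‖ = 1 from norm_one]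
      linarith
    · have hfac : (lam - (((1351 + 780 * Real.sqrt 3 : ℝ) : ℂ))) *
          (lam - (((1351 - 780 * Real.sqrt 3 : ℝ) : ℂ))) = 0 := by
        push_cast
        linear_combination h2 - (608400 : ℂ) * h3C
      rcases mul_eq_zero.mp hfac with h | h
      · rw [sub_eq_zero.mp h]
        rw [Complex.norm_real, Real.norm_eq_abs, abs_of_pos (by linarith)]
      · rw [sub_eq_zero.mp h]
        rw [Complex.norm_real, Real.norm_eq_abs, abs_of_pos hb]
        linarith
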